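/- Let ϑ be an arithmetic function with Σ_{d=1}^∞ |(ϑ∗μ)(d)| < ∞ (where ∗ is Dirichlet convolution and μ is the Möbius function). Let a, q ∈ ℤ with q > 0 and gcd(a,q) = 1. Then for t ≥ 0, Σ_{n ≤ t, n ≡ a (mod q)} ϑ(n) = (t/q)·Σ_{d ≥ 1, gcd(d,q)=1} (ϑ∗μ)(d)/d + O(Σ_{d ≥ 1} |(ϑ∗μ)(d)|), with implied constant absolute. -/

import Mathlib

noncomputable def dconv (ϑ : ℕ → ℝ) (d : ℕ) : ℝ :=
  ∑ e ∈ d.divisors, ϑ e * (ArithmeticFunction.moebius (d / e) : ℝ)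

open Finset

lemma dconv_inv (ϑ : ℕ → ℝ) : ∀ n > 0, ∑ i ∈ n.divisors, dconv ϑ i = ϑ n := by
  rw [ArithmeticFunction.sum_eq_iff_sum_smul_moebius_eq]
  intro n hn
  rw [Nat.sum_divisorsAntidiagonal' (f := fun x y => (ArithmeticFunction.moebius x : ℤ) • ϑ y)]
  unfold dconv
  refine Finset.sum_congr rfl fun d hd => ?_
  rw [zsmul_eq_mul]
  ring

lemma count_mod_bounds (q : ℕ) (hq : 0 < q) (K : ℕ) (r : ℕ) (hr : r < q) :
    K / q ≤ ((Finset.Icc 1 K).filter (fun m => m % q = r)).card ∧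
    ((Finset.Icc 1 K).filter (fun m => m % q = r)).card ≤ K / q + 1 := by
  obtain ⟨b, hb1, hbq, hbr⟩ : ∃ b, 1 ≤ b ∧ b ≤ q ∧ b % q = r := by
    rcases Nat.eq_zero_or_pos r with h | h
    · exact ⟨q, hq, le_refl q, by rw [Nat.mod_self, h]⟩
    · exact ⟨r, h, le_of_lt hr, Nat.mod_eq_of_lt hr⟩
  have hmem : ∀ m, m ∈ (Finset.Icc 1 K).filter (fun m => m % q = r) ↔
      (1 ≤ m ∧ m ≤ K ∧ m % q = r) := by
    intro m; simp [Finset.mem_filter, Finset.mem_Icc, and_assoc]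
  have hge : ∀ m, 1 ≤ m → m % q = r → b ≤ m := by
    intro m hm hmr
    rcases eq_or_lt_of_le hbq with h | h
    · subst h
      have hr0 : r = 0 := by rw [← hbr, Nat.mod_self]
      have hd : b ∣ m := Nat.dvd_of_mod_eq_zero (by rw [hmr, hr0])
      exact Nat.le_of_dvd hm hd
    · have hbb : b % q = b := Nat.mod_eq_of_lt h
      have : b = r := by rw [← hbr, hbb]
      have := Nat.mod_le m q
      omega
  constructor
  · have key : (Finset.range (K / q)).card ≤
        ((Finset.Icc 1 K).filter (fun m => m % q = r)).card := by
      apply Finset.card_le_card_of_injOn (fun k => b + q * k) ?_ ?_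
      · intro k hk
        simp only [Finset.mem_coe, Finset.mem_range] at hk
        show b + q * k ∈ (Finset.Icc 1 K).filter (fun m => m % q = r)
        rw [hmem]
        refine ⟨by omega, ?_, by rw [Nat.add_mul_mod_self_left, hbr]⟩
        have h1 : k + 1 ≤ K / q := hk
        have h2 : q * (k + 1) ≤ q * (K / q) := Nat.mul_le_mul_left q h1
        rw [Nat.mul_add, Nat.mul_one] at h2
        have h3 : q * (K / q) ≤ K := Nat.mul_div_le K q
        omega
      · intro k₁ _ k₂ _ h
        simp only at h
        exact Nat.eq_of_mul_eq_mul_left hq (by omega : q * k₁ = q * k₂)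
    simpa using key
  · have key : ((Finset.Icc 1 K).filter (fun m => m % q = r)).card ≤
        (Finset.range (K / q + 1)).card := by
      apply Finset.card_le_card_of_injOn (fun m => (m - b) / q) ?_ ?_
      · intro m hm
        simp only [Finset.mem_coe] at hm
        rw [hmem] at hm
        simp only [Finset.mem_coe, Finset.mem_range]
        have : (m - b) / q ≤ K / q := Nat.div_le_div_right (by omega)
        omega
      · intro m₁ hm₁ m₂ hm₂ h
        simp only [Finset.mem_coe] at hm₁ hm₂
        rw [hmem] at hm₁ hm₂
        have hq₁ : q ∣ m₁ - b := (Nat.modEq_iff_dvd' (hge m₁ hm₁.1 hm₁.2.2)).mp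
          (by unfold Nat.ModEq; rw [hbr, hm₁.2.2])
        have hq₂ : q ∣ m₂ - b := (Nat.modEq_iff_dvd' (hge m₂ hm₂.1 hm₂.2.2)).mp
          (by unfold Nat.ModEq; rw [hbr, hm₂.2.2])
        have e₁ : m₁ - b = q * ((m₁ - b) / q) := (Nat.mul_div_cancel' hq₁).symm
        have e₂ : m₂ - b = q * ((m₂ - b) / q) := (Nat.mul_div_cancel' hq₂).symm
        simp only at h
        have hb₁ := hge m₁ hm₁.1 hm₁.2.2
        have hb₂ := hge m₂ hm₂.1 hm₂.2.2
        rw [h] at e₁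
        omega
    simpa using key

lemma filter_empty_of_gcd_ne_one (a : ℤ) (q : ℕ) (hco : Int.gcd a q = 1) (d : ℕ)
    (hd : Nat.gcd d q ≠ 1) (N : ℕ) :
    (Finset.Icc 1 N).filter (fun n : ℕ => ((n:ℤ) ≡ a [ZMOD (q:ℤ)]) ∧ d ∣ n) = ∅ := by
  rw [Finset.filter_eq_empty_iff]
  intro n hn
  rw [Finset.mem_Icc] at hn
  rintro ⟨hmod, hdvd⟩
  apply hd
  set g := Nat.gcd d q with hg
  have hgd : (g : ℤ) ∣ (n : ℤ) := Int.natCast_dvd_natCast.mpr ((Nat.gcd_dvd_left d q).trans hdvd)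
  have hgq : (g : ℤ) ∣ (q : ℤ) := Int.natCast_dvd_natCast.mpr (Nat.gcd_dvd_right d q)
  have hqd : (q : ℤ) ∣ a - (n : ℤ) := Int.ModEq.dvd hmod
  have hga : (g : ℤ) ∣ a := by
    have : (g : ℤ) ∣ a - (n : ℤ) := hgq.trans hqd
    have := dvd_add this hgd
    simpa using this
  have : (g : ℤ) ∣ (Int.gcd a q : ℤ) := Int.dvd_coe_gcd hga hgq
  rw [hco] at this
  exact_mod_cast Int.eq_one_of_dvd_one (by positivity) this

lemma card_filter_eq_card (a : ℤ) (q : ℕ) (hq : 0 < q) (d : ℕ) (hd : 0 < d)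
    (hgcd : Nat.gcd d q = 1) (N : ℕ) :
    ((Finset.Icc 1 N).filter (fun n : ℕ => ((n:ℤ) ≡ a [ZMOD (q:ℤ)]) ∧ d ∣ n)).card =
    ((Finset.Icc 1 (N / d)).filter
      (fun m => m % q = (((d : ZMod q))⁻¹ * ((a : ℤ) : ZMod q)).val)).card := by
  haveI : NeZero q := ⟨hq.ne'⟩
  have hu : IsUnit (d : ZMod q) := (ZMod.isUnit_iff_coprime d q).mpr hgcd
  set u : ZMod q := (d : ZMod q)⁻¹ * ((a : ℤ) : ZMod q) with hu'
  have hmodiff : ∀ n : ℕ, ((n:ℤ) ≡ a [ZMOD (q:ℤ)]) ↔ ((n : ZMod q) = ((a : ℤ) : ZMod q)) := by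
    intro n
    rw [← ZMod.intCast_eq_intCast_iff]
    push_cast
    tauto
  have himg : ((Finset.Icc 1 (N / d)).filter (fun m : ℕ => (m : ZMod q) = u)).image (fun m => d * m)
      = (Finset.Icc 1 N).filter (fun n : ℕ => ((n:ℤ) ≡ a [ZMOD (q:ℤ)]) ∧ d ∣ n) := by
    ext n
    simp only [Finset.mem_image, Finset.mem_filter, Finset.mem_Icc]
    constructor
    · rintro ⟨m, ⟨⟨hm1, hm2⟩, hmu⟩, rfl⟩
      refine ⟨⟨Nat.mul_pos hd hm1, ?_⟩, ?_, Dvd.intro m rfl⟩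
      · calc d * m ≤ d * (N / d) := Nat.mul_le_mul_left d hm2
          _ ≤ N := Nat.mul_div_le N d
      · rw [hmodiff]
        push_cast
        rw [hmu, hu', ← mul_assoc, ZMod.mul_inv_of_unit _ hu, one_mul]
    · rintro ⟨⟨hn1, hn2⟩, hmod, hdvd⟩
      refine ⟨n / d, ⟨⟨?_, Nat.div_le_div_right hn2⟩, ?_⟩, (Nat.mul_div_cancel' hdvd)⟩
      · exact Nat.div_pos (Nat.le_of_dvd hn1 hdvd) hd
      · rw [hmodiff] at hmod
        have : ((d * (n / d) : ℕ) : ZMod q) = ((a : ℤ) : ZMod q) := by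
          rw [Nat.mul_div_cancel' hdvd]; exact hmod
        push_cast at this
        rw [hu', ← this, ← mul_assoc, ZMod.inv_mul_of_unit _ hu, one_mul]
  have hcond : ∀ m : ℕ, ((m : ZMod q) = u) ↔ (m % q = u.val) := by
    intro m
    constructor
    · intro h; rw [← h, ZMod.val_natCast]
    · intro h
      have : ((m % q : ℕ) : ZMod q) = ((u.val : ℕ) : ZMod q) := by rw [h]
      rwa [ZMod.natCast_mod, ZMod.natCast_val, ZMod.cast_id] at this
  rw [← himg, Finset.card_image_of_injective _ (fun x y hxy => by
    exact Nat.eq_of_mul_eq_mul_left hd hxy)]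
  congr 1
  apply Finset.filter_congr
  intro m _
  exact hcond m

lemma key_est (a : ℤ) (q : ℕ) (hq : 0 < q) (hco : Int.gcd a q = 1) (t : ℝ) (ht : 0 ≤ t)
    (d : ℕ) :
    |((((Finset.Icc 1 ⌊t⌋₊).filter (fun n : ℕ => ((n:ℤ) ≡ a [ZMOD (q:ℤ)]) ∧ d ∣ n)).card : ℝ))
      - (t / q) * (if Nat.gcd d q = 1 then ((d:ℝ))⁻¹ else 0)| ≤ 1 := by
  by_cases hgcd : Nat.gcd d q = 1
  · rcases Nat.eq_zero_or_pos d with rfl | hd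
    · have hempty : (Finset.Icc 1 ⌊t⌋₊).filter
          (fun n : ℕ => ((n:ℤ) ≡ a [ZMOD (q:ℤ)]) ∧ 0 ∣ n) = ∅ := by
        rw [Finset.filter_eq_empty_iff]
        intro n hn
        rw [Finset.mem_Icc] at hn
        rintro ⟨-, hdvd⟩
        rw [zero_dvd_iff] at hdvd
        omega
      rw [hempty, if_pos hgcd]
      simp
    · haveI : NeZero q := ⟨hq.ne'⟩
      rw [card_filter_eq_card a q hq d hd hgcd, if_pos hgcd]
      set r : ℕ := (((d : ZMod q))⁻¹ * ((a : ℤ) : ZMod q)).val with hrdef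
      have hr : r < q := ZMod.val_lt _
      set K : ℕ := ⌊t⌋₊ / d with hKdef
      obtain ⟨h1, h2⟩ := count_mod_bounds q hq K r hr
      set card := ((Finset.Icc 1 K).filter (fun m => m % q = r)).card with hcard
      have hKfloor : K = ⌊t / (d:ℝ)⌋₊ := by rw [hKdef, Nat.floor_div_natCast]
      have hK1 : (K : ℝ) ≤ t / d := by
        rw [hKfloor]; exact Nat.floor_le (div_nonneg ht (by positivity))
      have hK2 : t / d < (K : ℝ) + 1 := by
        rw [hKfloor]; exact_mod_cast Nat.lt_floor_add_one (t / (d:ℝ))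
      have hdm : K = q * (K / q) + K % q := (Nat.div_add_mod K q).symm
      have hmlt : K % q < q := Nat.mod_lt _ hq
      have hc2 : (K : ℝ) + 1 ≤ (q : ℝ) * ((K / q : ℕ) : ℝ) + q := by
        have : K + 1 ≤ q * (K / q) + q := by omega
        exact_mod_cast this
      have hA : (card : ℝ) ≤ ((K / q : ℕ) : ℝ) + 1 := by exact_mod_cast h2
      have hB : ((K / q : ℕ) : ℝ) ≤ (card : ℝ) := by exact_mod_cast h1
      have hC : ((K / q : ℕ) : ℝ) ≤ (t / d) / q := by
        have h' : ((K / q : ℕ) : ℝ) ≤ (K : ℝ) / q := Nat.cast_div_le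
        have h'' : (K : ℝ) / q ≤ (t / d) / q :=
          (div_le_div_iff_of_pos_right (by positivity : (0:ℝ) < q)).mpr hK1
        linarith
      have hD : (t / d) / q < ((K / q : ℕ) : ℝ) + 1 := by
        rw [div_lt_iff₀ (by positivity : (0:ℝ) < q)]
        have e : (((K / q : ℕ) : ℝ) + 1) * q = (q : ℝ) * ((K / q : ℕ) : ℝ) + q := by ring
        linarith
      have hxy : t / q * ((d:ℝ))⁻¹ = t / d / q := by
        rw [← div_eq_mul_inv, div_div, div_div, mul_comm]
      rw [hxy, abs_le]
      constructor <;> linarith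
  · rw [filter_empty_of_gcd_ne_one a q hco d hgcd, if_neg hgcd]
    simp

lemma swap_sum (ϑ : ℕ → ℝ) (N : ℕ) (P : ℕ → Prop) [DecidablePred P] :
    ∑ n ∈ (Finset.Icc 1 N).filter P, ϑ n =
    ∑ i ∈ Finset.range (N+1), dconv ϑ i *
      (((Finset.Icc 1 N).filter (fun n => P n ∧ i ∣ n)).card : ℝ) := by
  have step1 : ∀ n ∈ (Finset.Icc 1 N).filter P,
      ϑ n = ∑ i ∈ Finset.range (N+1), if i ∣ n then dconv ϑ i else 0 := by
    intro n hn
    rw [Finset.mem_filter, Finset.mem_Icc] at hn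
    have hset : (Finset.range (N+1)).filter (· ∣ n) = n.divisors := by
      ext i
      simp only [Finset.mem_filter, Finset.mem_range, Nat.mem_divisors]
      constructor
      · rintro ⟨-, h⟩; exact ⟨h, by omega⟩
      · rintro ⟨h, -⟩
        have := Nat.le_of_dvd (by omega) h
        exact ⟨by omega, h⟩
    rw [← dconv_inv ϑ n (by omega), ← hset, Finset.sum_filter]
  rw [Finset.sum_congr rfl step1, Finset.sum_comm]
  refine Finset.sum_congr rfl fun i _ => ?_
  rw [← Finset.sum_filter, Finset.filter_filter, Finset.sum_const, nsmul_eq_mul, mul_comm]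

theorem stmt_9 :
    ∃ C : ℝ, ∀ (ϑ : ℕ → ℝ), Summable (fun d => |dconv ϑ d|) →
      ∀ (a : ℤ) (q : ℕ), 0 < q → Int.gcd a q = 1 →
      ∀ t : ℝ, 0 ≤ t →
      |(∑ n ∈ (Finset.Icc 1 ⌊t⌋₊).filter (fun n : ℕ => (n:ℤ) ≡ a [ZMOD (q:ℤ)]), ϑ n) -
        (t / q) * ∑' d : ℕ, (if Nat.gcd d q = 1 then dconv ϑ d / d else 0)| ≤
      C * ∑' d : ℕ, |dconv ϑ d| := by
  refine ⟨1, ?_⟩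
  intro ϑ hsum a q hq hco t ht
  classical
  set N := ⌊t⌋₊ with hN
  set G : ℕ → ℝ := fun i => dconv ϑ i *
    (((Finset.Icc 1 N).filter (fun n : ℕ => ((n:ℤ) ≡ a [ZMOD (q:ℤ)]) ∧ i ∣ n)).card : ℝ)
    with hG
  set main : ℕ → ℝ := fun i => if Nat.gcd i q = 1 then dconv ϑ i / i else 0 with hmain
  have hGzero : ∀ i ∉ Finset.range (N+1), G i = 0 := by
    intro i hi
    rw [Finset.mem_range] at hi
    have hempty : (Finset.Icc 1 N).filter
        (fun n : ℕ => ((n:ℤ) ≡ a [ZMOD (q:ℤ)]) ∧ i ∣ n) = ∅ := by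
      rw [Finset.filter_eq_empty_iff]
      intro n hn
      rw [Finset.mem_Icc] at hn
      rintro ⟨-, hdvd⟩
      have := Nat.le_of_dvd (by omega) hdvd
      omega
    rw [hG]
    simp [hempty]
  have hsum_eq : ∑ n ∈ (Finset.Icc 1 N).filter (fun n : ℕ => (n:ℤ) ≡ a [ZMOD (q:ℤ)]), ϑ n
      = ∑' i, G i := by
    rw [swap_sum ϑ N (fun n : ℕ => (n:ℤ) ≡ a [ZMOD (q:ℤ)]), tsum_eq_sum hGzero]
  have hGsum : Summable G := summable_of_ne_finset_zero hGzero
  have hmain_bound : ∀ i, |main i| ≤ |dconv ϑ i| := by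
    intro i
    rw [hmain]
    simp only
    split
    · rcases Nat.eq_zero_or_pos i with rfl | hi
      · simp
      · rw [abs_div, abs_of_nonneg (by positivity : (0:ℝ) ≤ (i:ℝ))]
        apply div_le_self (abs_nonneg _)
        exact_mod_cast hi
    · simp [abs_nonneg]
  have hmain_sum : Summable main :=
    Summable.of_norm_bounded hsum (by simpa [Real.norm_eq_abs] using hmain_bound)
  have key : ∀ i, |G i - (t/q) * main i| ≤ |dconv ϑ i| := by
    intro i
    have h := key_est a q hq hco t ht i
    have factored : G i - (t/q) * main i =
        dconv ϑ i * (((((Finset.Icc 1 N).filter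
          (fun n : ℕ => ((n:ℤ) ≡ a [ZMOD (q:ℤ)]) ∧ i ∣ n)).card : ℝ))
          - (t / q) * (if Nat.gcd i q = 1 then ((i:ℝ))⁻¹ else 0)) := by
      rw [hG, hmain]
      simp only
      split
      · rw [div_eq_mul_inv]; ring
      · ring
    rw [factored, abs_mul]
    calc |dconv ϑ i| * _ ≤ |dconv ϑ i| * 1 :=
          mul_le_mul_of_nonneg_left h (abs_nonneg _)
      _ = |dconv ϑ i| := mul_one _
  have hFabs : Summable (fun i => |G i - (t/q) * main i|) :=
    Summable.of_nonneg_of_le (fun i => abs_nonneg _) key hsum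
  have hFsum : Summable (fun i => G i - (t/q) * main i) :=
    hGsum.sub (hmain_sum.mul_left _)
  have hdiff : (∑ n ∈ (Finset.Icc 1 N).filter
        (fun n : ℕ => (n:ℤ) ≡ a [ZMOD (q:ℤ)]), ϑ n) - (t/q) * ∑' i, main i
      = ∑' i, (G i - (t/q) * main i) := by
    rw [hsum_eq, ← tsum_mul_left, Summable.tsum_sub hGsum (hmain_sum.mul_left _)]
  rw [one_mul, hdiff]
  have h1 : ‖∑' i, (G i - (t/q) * main i)‖ ≤ ∑' i, ‖G i - (t/q) * main i‖ :=
    norm_tsum_le_tsum_norm (f := fun i => G i - (t/q) * main i)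
      (by simpa [Real.norm_eq_abs] using hFabs)
  simp only [Real.norm_eq_abs] at h1
  exact le_trans h1 (Summable.tsum_le_tsum key hFabs hsum)
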